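/- Hoeffding-type concentration bound for empirical fluxes of a classical Markov chain (Proposition 5.2): Let F := {h : E → ℂ with Σ_{x∈E} σ_x h(x) = 0}; Id−P maps F bijectively onto F, and let ‖(Id−P)^{-1}|_F‖_∞ be the operator norm of its inverse on F induced by the sup-norm on functions. Let f : Ẽ → ℝ satisfy π(f) = 0 and max_{(x,y)∈Ẽ}|f(x,y)| = c for some c > 0, and set G := (1 + ‖(Id−P)^{-1}|_F‖_∞)·c. Then for every initial law ν, every γ > 0 and every n ≥ 1 with nγ ≥ 2G: P_ν( (1/n)·Σ_{k=1}^n f(X_k, X_{k+1}) ≥ γ ) ≤ exp( −(nγ − 2G)² / (2(n−1)G²) ). -/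

import Mathlib

open Matrix MeasureTheory Finset
open scoped ComplexOrder
noncomputable section

/-- The algebra `M_d(ℂ)` of `d × d` complex matrices. -/
abbrev Md (d : ℕ) := Matrix (Fin d) (Fin d) ℂ

/-- KMS inner product `⟨x,y⟩ = tr(s x* s y)` where `s = σ^{1/2}`. -/
def kmsInner {d : ℕ} (s x y : Md d) : ℂ := (s * xᴴ * s * y).trace

/-- KMS norm `‖x‖₂ = tr(s x* s x)^{1/2}` where `s = σ^{1/2}`. -/
def kmsNorm {d : ℕ} (s x : Md d) : ℝ := Real.sqrt ((s * xᴴ * s * x).trace.re)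

/-- Operator norm of a map on `M_d(ℂ)` induced by the KMS norm. -/
def kmsOpNorm {d : ℕ} (s : Md d) (η : Md d → Md d) : ℝ :=
  sInf {C : ℝ | 0 ≤ C ∧ ∀ x, kmsNorm s (η x) ≤ C * kmsNorm s x}

/-- Spectral (operator) norm of a matrix, i.e. the operator norm of the induced map
on Euclidean space. -/
def specNorm {d : ℕ} (x : Md d) : ℝ :=
  ‖(LinearMap.toContinuousLinearMap (Matrix.toEuclideanLin x))‖

/-- The square root of a positive semidefinite matrix, as `Matrix.PosSemidef.sqrt` was
defined in the older Mathlib (removed since). -/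
def posSemidefSqrtOld {d : ℕ} {A : Md d} (hA : A.PosSemidef) : Md d :=
  hA.1.eigenvectorUnitary.1 * diagonal ((↑) ∘ (√·) ∘ hA.1.eigenvalues) *
  (star hA.1.eigenvectorUnitary : Md d)


/-- The positive square root `σ^{1/2}` of a positive definite state. -/
def sqrtm {d : ℕ} (σ : Md d) (hσ : σ.PosDef) : Md d := posSemidefSqrtOld hσ.posSemidef

/-- The quantum channel (Heisenberg picture) `Φ(x) = Σ_i V_i* x V_i`. -/
def channel {d : ℕ} {I : Type*} [Fintype I] (V : I → Md d) (x : Md d) : Md d :=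
  ∑ i, (V i)ᴴ * x * V i

/-- The dual (Schrödinger picture) channel `Φ*(ρ) = Σ_i V_i ρ V_i*`. -/
def channelDual {d : ℕ} {I : Type*} [Fintype I] (V : I → Md d) (ρ : Md d) : Md d :=
  ∑ i, V i * ρ * (V i)ᴴ

/-- The KMS adjoint `Φ† = Γ_σ^{-1/2} ∘ Φ* ∘ Γ_σ^{1/2}` of the channel with Kraus
operators `V`, where `s = σ^{1/2}`. -/
def channelKMSAdj {d : ℕ} {I : Type*} [Fintype I] (V : I → Md d) (s : Md d) (x : Md d) : Md d :=
  s⁻¹ * channelDual V (s * x * s) * s⁻¹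

/-- Irreducibility of a completely positive map given by Kraus operators `W`:
for every nonzero `v` the span of all `W_{j_n} ⋯ W_{j_1} v` is everything. -/
def IrredKraus {d : ℕ} {J : Type*} (W : J → Md d) : Prop :=
  ∀ v : Fin d → ℂ, v ≠ 0 →
    Submodule.span ℂ {u : Fin d → ℂ | ∃ l : List J, u = ((l.map W).prod).mulVec v} = ⊤

/-- The operator `V_{i_n} ⋯ V_{i_1}` associated with a measurement trajectory. -/
def trajOp {d : ℕ} {I : Type*} (V : I → Md d) {n : ℕ} (ω : Fin n → I) : Md d :=
  ((List.ofFn fun k => V (ω k)).reverse).prod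

/-- The probability `tr(V_{i_n} ⋯ V_{i_1} ρ V_{i_1}* ⋯ V_{i_n}*)` of a trajectory. -/
def trajProb {d : ℕ} {I : Type*} (V : I → Md d) (ρ : Md d) {n : ℕ} (ω : Fin n → I) : ℝ :=
  ((trajOp V ω) * ρ * (trajOp V ω)ᴴ).trace.re

/-- The function `h(x) = 1/(√(1+x) + x/2 + 1)` from the Bernstein bound. -/
def hfun (x : ℝ) : ℝ := (Real.sqrt (1 + x) + x / 2 + 1)⁻¹

/-- The norm `‖(Id - Φ)^{-1}|_F‖_∞` of the inverse of `Id - Φ` on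
`F = {x : tr(σ x) = 0}`, with respect to the spectral norm. -/
def pseudoResNorm {d : ℕ} {I : Type*} [Fintype I] (V : I → Md d) (σ : Md d) : ℝ :=
  sInf {C : ℝ | 0 ≤ C ∧ ∀ x : Md d, (σ * x).trace = 0 →
    specNorm x ≤ C * specNorm (x - channel V x)}

/-- The norm `‖(Id−P)^{-1}|_F‖_∞` of the inverse of `Id − P` on
`F = {h : E → ℂ : Σ_x σ_x h(x) = 0}`, induced by the sup-norm on functions. -/
def pseudoResNormClassical {E : Type*} [Fintype E] (p : E → E → ℝ) (σ : E → ℝ) : ℝ :=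
  sInf {C : ℝ | 0 ≤ C ∧ ∀ h : E → ℂ, (∑ x, (σ x : ℂ) * h x = 0) →
    ‖h‖ ≤ C * ‖(fun x => h x - ∑ y, (p x y : ℂ) * h y)‖}

lemma core_exp_bound (p : ℝ) (hp0 : 0 ≤ p) (hp1 : p ≤ 1) (u : ℝ) :
    1 - p + p * Real.exp u ≤ Real.exp (p * u + u ^ 2 / 8) := by
  have hpos : ∀ x : ℝ, 0 < 1 - p + p * Real.exp x := by
    intro x
    rcases lt_or_eq_of_le hp1 with h | h
    · have := Real.exp_pos x
      nlinarith
    · subst h; simpa using Real.exp_pos x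
  set ψ' : ℝ → ℝ := fun x => p + x / 4 - p * Real.exp x / (1 - p + p * Real.exp x) with hψ'
  set ψ : ℝ → ℝ := fun x => p * x + x ^ 2 / 8 - Real.log (1 - p + p * Real.exp x) with hψ
  have hder : ∀ x, HasDerivAt ψ (ψ' x) x := by
    intro x
    have h1 : HasDerivAt (fun y : ℝ => 1 - p + p * Real.exp y) (p * Real.exp x) x :=
      ((Real.hasDerivAt_exp x).const_mul p).const_add (1 - p)
    have h2 : HasDerivAt (fun y : ℝ => Real.log (1 - p + p * Real.exp y))
        (p * Real.exp x / (1 - p + p * Real.exp x)) x := h1.log (ne_of_gt (hpos x))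
    have h3 : HasDerivAt (fun y : ℝ => p * y + y ^ 2 / 8) (p + 2 * x / 8) x := by
      have := ((hasDerivAt_id x).const_mul p).add ((hasDerivAt_pow 2 x).div_const 8)
      exact this.congr_deriv (by norm_num)
    have := h3.sub h2
    refine this.congr_deriv ?_; simp only [hψ']; ring
  have hder' : ∀ x, HasDerivAt ψ'
      (1 / 4 - (p * Real.exp x * (1 - p + p * Real.exp x) - p * Real.exp x * (p * Real.exp x)) /
        (1 - p + p * Real.exp x) ^ 2) x := by
    intro x
    have h1 : HasDerivAt (fun y : ℝ => 1 - p + p * Real.exp y) (p * Real.exp x) x :=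
      ((Real.hasDerivAt_exp x).const_mul p).const_add (1 - p)
    have h0 : HasDerivAt (fun y : ℝ => p * Real.exp y) (p * Real.exp x) x :=
      (Real.hasDerivAt_exp x).const_mul p
    have hdiv := h0.div h1 (ne_of_gt (hpos x))
    have h3 : HasDerivAt (fun y : ℝ => p + y / 4) (1 / 4) x := by
      have := (hasDerivAt_id x).div_const 4 |>.const_add p
      simpa using this
    have := h3.sub hdiv
    exact this
  have hsec : ∀ x, 0 ≤ 1 / 4 -
      (p * Real.exp x * (1 - p + p * Real.exp x) - p * Real.exp x * (p * Real.exp x)) /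
        (1 - p + p * Real.exp x) ^ 2 := by
    intro x
    have hx := hpos x
    have he := Real.exp_pos x
    have : (p * Real.exp x * (1 - p + p * Real.exp x) - p * Real.exp x * (p * Real.exp x)) /
        (1 - p + p * Real.exp x) ^ 2 ≤ 1 / 4 := by
      rw [div_le_iff₀ (by positivity)]
      nlinarith [sq_nonneg (p * Real.exp x - (1 - p))]
    linarith
  have hmono' : Monotone ψ' := by
    apply monotone_of_deriv_nonneg
    · exact fun x => (hder' x).differentiableAt
    · intro x; rw [(hder' x).deriv]; exact hsec x
  have hψ'0 : ψ' 0 = 0 := by simp [hψ']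
  have hψ0 : ψ 0 = 0 := by simp [hψ]
  have hge : ∀ x, 0 ≤ ψ x := by
    intro x
    rcases le_total 0 x with h | h
    · have : MonotoneOn ψ (Set.Ici 0) := by
        apply monotoneOn_of_deriv_nonneg (convex_Ici 0)
        · exact Continuous.continuousOn (continuous_iff_continuousAt.mpr
            (fun x => (hder x).differentiableAt.continuousAt))
        · intro x _; exact (hder x).differentiableAt.differentiableWithinAt
        · intro x hx
          rw [(hder x).deriv]
          have := hmono' (le_of_lt (by simpa using hx) : (0:ℝ) ≤ x)
          simpa [hψ'0] using this
      have := this (Set.self_mem_Ici) (Set.mem_Ici.mpr h) h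
      simpa [hψ0] using this
    · have : AntitoneOn ψ (Set.Iic 0) := by
        apply antitoneOn_of_deriv_nonpos (convex_Iic 0)
        · exact Continuous.continuousOn (continuous_iff_continuousAt.mpr
            (fun x => (hder x).differentiableAt.continuousAt))
        · intro x _; exact (hder x).differentiableAt.differentiableWithinAt
        · intro x hx
          rw [(hder x).deriv]
          have := hmono' (le_of_lt (by simpa using hx) : x ≤ (0:ℝ))
          simpa [hψ'0] using this
      have := this (Set.mem_Iic.mpr h) (Set.self_mem_Iic) h
      simpa [hψ0] using this
  have hlog : Real.log (1 - p + p * Real.exp u) ≤ p * u + u ^ 2 / 8 := by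
    have := hge u; simp [hψ] at this; linarith
  calc 1 - p + p * Real.exp u = Real.exp (Real.log (1 - p + p * Real.exp u)) :=
        (Real.exp_log (hpos u)).symm
    _ ≤ Real.exp (p * u + u ^ 2 / 8) := Real.exp_le_exp.mpr hlog


theorem hoeffding_discrete {ι : Type*} [Fintype ι] (q z : ι → ℝ) (G t : ℝ) (hG : 0 < G)
    (hq0 : ∀ i, 0 ≤ q i) (hq1 : ∑ i, q i = 1)
    (hz : ∀ i, q i ≠ 0 → |z i| ≤ G) :
    ∑ i, q i * Real.exp (t * (z i - ∑ j, q j * z j)) ≤ Real.exp (t ^ 2 * G ^ 2 / 2) := by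
  set μ : ℝ := ∑ j, q j * z j with hμ
  set r : ι → ℝ := fun i => (z i + G) / (2 * G) with hr
  set R : ℝ := ∑ i, q i * r i with hR
  -- termwise convexity bound
  have hterm : ∀ i, q i * Real.exp (t * z i) ≤
      q i * ((1 - r i) * Real.exp (-(t * G)) + r i * Real.exp (t * G)) := by
    intro i
    rcases eq_or_ne (q i) 0 with h | h
    · simp [h]
    · apply mul_le_mul_of_nonneg_left _ (hq0 i)
      have hzi := hz i h
      have hr0 : 0 ≤ r i := by
        rw [hr]; apply div_nonneg _ (by linarith)
        have := abs_le.mp hzi; linarith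
      have hr1 : r i ≤ 1 := by
        rw [hr, div_le_one (by linarith)]
        have := abs_le.mp hzi; linarith
      have hcomb : t * z i = (1 - r i) * (-(t * G)) + r i * (t * G) := by
        have : z i = (1 - r i) * (-G) + r i * G := by
          rw [hr]; field_simp; ring
        rw [this]; ring
      rw [hcomb]
      have := (convexOn_exp.2 (Set.mem_univ (-(t*G))) (Set.mem_univ (t*G))
        (by linarith : (0:ℝ) ≤ 1 - r i) hr0 (by ring)).trans_eq rfl
      simpa [smul_eq_mul] using this
  have hRmean : μ = 2 * G * R - G := by
    have : ∀ i, q i * r i = (q i * z i + q i * G) / (2 * G) := by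
      intro i; rw [hr]; field_simp
    rw [hR, Finset.sum_congr rfl (fun i _ => this i)]
    rw [← Finset.sum_div, Finset.sum_add_distrib, ← Finset.sum_mul, hq1]
    field_simp [hμ]
    rw [hμ]; ring
  have hR0 : 0 ≤ R := by
    apply Finset.sum_nonneg; intro i _
    rcases eq_or_ne (q i) 0 with h | h
    · simp [h]
    · apply mul_nonneg (hq0 i)
      have := abs_le.mp (hz i h); rw [hr]; apply div_nonneg _ (by linarith); linarith
  have hR1 : R ≤ 1 := by
    rw [← hq1, hR]
    apply Finset.sum_le_sum; intro i _
    rcases eq_or_ne (q i) 0 with h | h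
    · simp [h]
    · have := abs_le.mp (hz i h)
      have hr1 : r i ≤ 1 := by rw [hr, div_le_one (by linarith)]; linarith
      nlinarith [hq0 i]
  -- main computation
  have hfac : ∀ i, q i * Real.exp (t * (z i - μ)) = q i * Real.exp (t * z i) * Real.exp (-(t * μ)) := by
    intro i; rw [mul_assoc, ← Real.exp_add]; ring_nf
  calc ∑ i, q i * Real.exp (t * (z i - μ))
      = (∑ i, q i * Real.exp (t * z i)) * Real.exp (-(t * μ)) := by
        rw [Finset.sum_mul]; exact Finset.sum_congr rfl (fun i _ => hfac i)
    _ ≤ (∑ i, q i * ((1 - r i) * Real.exp (-(t * G)) + r i * Real.exp (t * G))) *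
          Real.exp (-(t * μ)) := by
        apply mul_le_mul_of_nonneg_right (Finset.sum_le_sum (fun i _ => hterm i))
          (Real.exp_pos _).le
    _ = ((1 - R) * Real.exp (-(t * G)) + R * Real.exp (t * G)) * Real.exp (-(t * μ)) := by
        congr 1
        have h1 : ∑ i, q i * ((1 - r i) * Real.exp (-(t * G)) + r i * Real.exp (t * G)) =
            (∑ i, q i) * Real.exp (-(t * G)) - (∑ i, q i * r i) * Real.exp (-(t * G)) +
            (∑ i, q i * r i) * Real.exp (t * G) := by
          rw [Finset.sum_mul, Finset.sum_mul, Finset.sum_mul, ← Finset.sum_sub_distrib,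
            ← Finset.sum_add_distrib]
          exact Finset.sum_congr rfl (fun i _ => by ring)
        rw [h1, hq1, ← hR]; ring
    _ ≤ Real.exp (t ^ 2 * G ^ 2 / 2) := by
        have key := core_exp_bound R hR0 hR1 (2 * t * G)
        have e1 : (1 - R) * Real.exp (-(t * G)) + R * Real.exp (t * G) =
            (1 - R + R * Real.exp (2 * t * G)) * Real.exp (-(t * G)) := by
          rw [add_mul, mul_assoc, ← Real.exp_add]; ring_nf
        rw [e1, hRmean]
        rw [mul_assoc, ← Real.exp_add]
        calc (1 - R + R * Real.exp (2 * t * G)) * Real.exp (-(t * G) + -(t * (2 * G * R - G)))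
            ≤ Real.exp (R * (2 * t * G) + (2 * t * G) ^ 2 / 8) *
              Real.exp (-(t * G) + -(t * (2 * G * R - G))) := by
              apply mul_le_mul_of_nonneg_right key (Real.exp_pos _).le
          _ = Real.exp (t ^ 2 * G ^ 2 / 2) := by rw [← Real.exp_add]; congr 1; ring


theorem path_sum_le {E : Type*} [Fintype E] [Nonempty E] :
    ∀ (m : ℕ) (q : Fin m → E → E → ℝ) (K : Fin m → ℝ) (μ : E → ℝ),
    (∀ k x y, 0 ≤ q k x y) → (∀ k x, ∑ y, q k x y ≤ K k) → (∀ x, 0 ≤ μ x) →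
    ∑ τ : Fin (m + 1) → E, μ (τ 0) * ∏ k : Fin m, q k (τ k.castSucc) (τ k.succ) ≤
      (∑ x, μ x) * ∏ k : Fin m, K k := by
  intro m
  induction m with
  | zero =>
    intro q K μ _ _ _
    simp only [Finset.univ_unique, Fin.prod_univ_zero, mul_one]
    exact le_of_eq (Fintype.sum_equiv (Equiv.funUnique (Fin 1) E) _ _ (fun τ => rfl))
  | succ m ih =>
    intro q K μ hq0 hqK hμ0
    have hK0 : ∀ k, 0 ≤ K k := by
      intro k
      obtain ⟨x⟩ := ‹Nonempty E›
      exact le_trans (Finset.sum_nonneg fun y _ => hq0 k x y) (hqK k x)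
    -- reindex paths via cons
    have hsum : ∑ τ : Fin (m + 2) → E, μ (τ 0) * ∏ k : Fin (m + 1), q k (τ k.castSucc) (τ k.succ)
        = ∑ x : E, ∑ τ : Fin (m + 1) → E, (μ x * q 0 x (τ 0)) *
            ∏ k : Fin m, q k.succ (τ k.castSucc) (τ k.succ) := by
      rw [← (Fin.consEquiv (fun _ : Fin (m + 2) => E)).sum_comp
        (fun τ => μ (τ 0) * ∏ k : Fin (m + 1), q k (τ k.castSucc) (τ k.succ))]
      rw [Fintype.sum_prod_type]
      apply Finset.sum_congr rfl; intro x _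
      apply Finset.sum_congr rfl; intro τ _
      have hcons : (Fin.consEquiv (fun _ : Fin (m + 2) => E)) (x, τ) = Fin.cons x τ := rfl
      rw [hcons]
      rw [Fin.prod_univ_succ]
      have e0 : (Fin.cons x τ : Fin (m + 2) → E) ((0 : Fin (m+1)).castSucc) = x := rfl
      have e1 : (Fin.cons x τ : Fin (m + 2) → E) ((0 : Fin (m+1)).succ) = τ 0 := by
        rw [Fin.cons_succ]
      have e2 : ∀ k : Fin m,
          q k.succ ((Fin.cons x τ : Fin (m + 2) → E) (k.succ.castSucc))
            ((Fin.cons x τ : Fin (m + 2) → E) (k.succ.succ))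
          = q k.succ (τ k.castSucc) (τ k.succ) := by
        intro k
        rw [← Fin.succ_castSucc, Fin.cons_succ, Fin.cons_succ]
      simp only [Fin.cons_zero]
      rw [e0, e1]
      rw [Finset.prod_congr rfl (fun k _ => e2 k)]
      ring
    rw [hsum]
    have hswap : ∑ x : E, ∑ τ : Fin (m + 1) → E, (μ x * q 0 x (τ 0)) *
        ∏ k : Fin m, q k.succ (τ k.castSucc) (τ k.succ)
        = ∑ τ : Fin (m + 1) → E, (∑ x : E, μ x * q 0 x (τ 0)) *
            ∏ k : Fin m, q k.succ (τ k.castSucc) (τ k.succ) := by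
      rw [Finset.sum_comm]
      exact Finset.sum_congr rfl (fun τ _ => by rw [Finset.sum_mul])
    rw [hswap]
    have happ := ih (fun k => q k.succ) (fun k => K k.succ)
      (fun y => ∑ x : E, μ x * q 0 x y)
      (fun k x y => hq0 k.succ x y) (fun k x => hqK k.succ x)
      (fun y => Finset.sum_nonneg fun x _ => mul_nonneg (hμ0 x) (hq0 0 x y))
    refine le_trans happ ?_
    rw [Fin.prod_univ_succ, ← mul_assoc]
    apply mul_le_mul_of_nonneg_right _ (Finset.prod_nonneg fun k _ => hK0 k.succ)
    rw [Finset.sum_comm]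
    calc ∑ x : E, ∑ y : E, μ x * q 0 x y = ∑ x : E, μ x * ∑ y : E, q 0 x y := by
          exact Finset.sum_congr rfl (fun x _ => by rw [Finset.mul_sum])
      _ ≤ ∑ x : E, μ x * K 0 :=
          Finset.sum_le_sum (fun x _ => mul_le_mul_of_nonneg_left (hqK 0 x) (hμ0 x))
      _ = (∑ x, μ x) * K 0 := by rw [← Finset.sum_mul]

theorem fin_telescope {m : ℕ} (F : Fin (m + 1) → ℝ) :
    ∑ k : Fin m, (F k.succ - F k.castSucc) = F (Fin.last m) - F 0 := by
  induction m with
  | zero => simp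
  | succ m ih =>
    rw [Fin.sum_univ_castSucc]
    have e : ∀ k : Fin m, F k.castSucc.succ - F k.castSucc.castSucc =
        (F ∘ Fin.castSucc) k.succ - (F ∘ Fin.castSucc) k.castSucc := by
      intro k
      simp only [Function.comp_apply, Fin.succ_castSucc]
    rw [Finset.sum_congr rfl (fun k _ => e k), ih (F ∘ Fin.castSucc)]
    simp only [Function.comp_apply, Fin.succ_last, Fin.castSucc_zero]
    ring



lemma pow_row_stochastic {E : Type*} [Fintype E] [DecidableEq E]
    (p : E → E → ℝ) (hp0 : ∀ x y, 0 ≤ p x y) (hp1 : ∀ x, ∑ y, p x y = 1) (n : ℕ) :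
    (∀ x y, 0 ≤ ((Matrix.of p) ^ n) x y) ∧ (∀ x, ∑ y, ((Matrix.of p) ^ n) x y = 1) := by
  induction n with
  | zero =>
    refine ⟨fun x y => ?_, fun x => ?_⟩
    · simp only [pow_zero, Matrix.one_apply]
      split <;> norm_num
    · simp [pow_zero, Matrix.one_apply]
  | succ n ih =>
    refine ⟨fun x y => ?_, fun x => ?_⟩
    · rw [pow_succ, Matrix.mul_apply]
      exact Finset.sum_nonneg fun z _ => mul_nonneg (ih.1 x z) (hp0 z y)
    · simp only [pow_succ, Matrix.mul_apply]
      rw [Finset.sum_comm]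
      have : ∀ z, ∑ y, ((Matrix.of p) ^ n) x z * (Matrix.of p) z y
          = ((Matrix.of p) ^ n) x z := by
        intro z
        rw [← Finset.mul_sum]
        have : ∑ y, (Matrix.of p) z y = 1 := hp1 z
        rw [this, mul_one]
      rw [Finset.sum_congr rfl fun z _ => this z, ih.2 x]

lemma harmonic_const {E : Type*} [Fintype E] [DecidableEq E] [Nonempty E]
    (p : E → E → ℝ) (hp0 : ∀ x y, 0 ≤ p x y) (hp1 : ∀ x, ∑ y, p x y = 1)
    (hPirr : ∀ x y, ∃ n : ℕ, 0 < ((Matrix.of p) ^ n) x y)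
    (h : E → ℂ) (hh : ∀ x, h x = ∑ y, (p x y : ℂ) * h y) :
    ∀ x y, h x = h y := by
  have hpow : ∀ (n : ℕ) (x : E), h x = ∑ y, ((((Matrix.of p) ^ n) x y : ℝ) : ℂ) * h y := by
    intro n
    induction n with
    | zero =>
      intro x
      simp [Matrix.one_apply, apply_ite (fun r : ℝ => (r : ℂ))]
    | succ n ih =>
      intro x
      rw [ih x]
      have : ∀ y, (((((Matrix.of p) ^ n) x y : ℝ)) : ℂ) * h y
          = ∑ z, ((((Matrix.of p) ^ n) x y : ℝ) : ℂ) * ((p y z : ℂ) * h z) := by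
        intro y
        rw [← Finset.mul_sum, ← hh y]
      rw [Finset.sum_congr rfl fun y _ => this y, Finset.sum_comm]
      apply Finset.sum_congr rfl
      intro z _
      rw [pow_succ, Matrix.mul_apply]
      push_cast
      rw [Finset.sum_mul]
      apply Finset.sum_congr rfl
      intro y _
      have : (Matrix.of p) y z = p y z := rfl
      rw [this]; ring
  obtain ⟨x₀, -, hmax⟩ := Finset.exists_max_image Finset.univ
    (fun x => ‖h x‖) ⟨Classical.arbitrary E, Finset.mem_univ _⟩
  set a : ℂ := h x₀ with ha
  set M : ℝ := ‖a‖ with hM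
  have key : ∀ z : E, h z = a := by
    intro z
    obtain ⟨n, hn⟩ := hPirr x₀ z
    set w : E → ℝ := fun y => ((Matrix.of p) ^ n) x₀ y with hw
    have hw0 : ∀ y, 0 ≤ w y := fun y => (pow_row_stochastic p hp0 hp1 n).1 x₀ y
    have hw1 : ∑ y, w y = 1 := (pow_row_stochastic p hp0 hp1 n).2 x₀
    have hherm : a = ∑ y, ((w y : ℝ) : ℂ) * h y := hpow n x₀
    -- sum of nonneg terms equal zero
    have hsumre : ∑ y, w y * ((starRingEnd ℂ) a * h y).re = M ^ 2 := by
      have e1 : ∀ y, w y * ((starRingEnd ℂ) a * h y).re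
          = (((w y : ℝ) : ℂ) * ((starRingEnd ℂ) a * h y)).re := by
        intro y; rw [Complex.re_ofReal_mul]
      rw [Finset.sum_congr rfl fun y _ => e1 y, ← Complex.re_sum]
      have e2 : ∑ y, ((w y : ℝ) : ℂ) * ((starRingEnd ℂ) a * h y)
          = (starRingEnd ℂ) a * ∑ y, ((w y : ℝ) : ℂ) * h y := by
        rw [Finset.mul_sum]
        exact Finset.sum_congr rfl fun y _ => by ring
      rw [e2, ← hherm, mul_comm, Complex.mul_conj, Complex.normSq_eq_norm_sq]
      simp [hM]
      norm_cast
    have hzero : ∑ y, w y * (M ^ 2 - ((starRingEnd ℂ) a * h y).re) = 0 := by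
      rw [Finset.sum_congr rfl (fun y _ => mul_sub (w y) (M ^ 2) _), Finset.sum_sub_distrib]
      rw [← Finset.sum_mul, hw1, hsumre]; ring
    have hnonneg : ∀ y ∈ Finset.univ, 0 ≤ w y * (M ^ 2 - ((starRingEnd ℂ) a * h y).re) := by
      intro y _
      apply mul_nonneg (hw0 y)
      have h1 : ((starRingEnd ℂ) a * h y).re ≤ ‖(starRingEnd ℂ) a * h y‖ :=
        Complex.re_le_norm _
      have h2 : ‖(starRingEnd ℂ) a * h y‖ = M * ‖h y‖ := by
        rw [norm_mul, Complex.norm_conj]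
      have h3 : ‖h y‖ ≤ M := hmax y (Finset.mem_univ y)
      have hM0 : 0 ≤ M := norm_nonneg a
      nlinarith
    have heach := (Finset.sum_eq_zero_iff_of_nonneg hnonneg).mp hzero z (Finset.mem_univ z)
    have hwz : w z ≠ 0 := ne_of_gt hn
    have hre : ((starRingEnd ℂ) a * h z).re = M ^ 2 := by
      rcases mul_eq_zero.mp heach with h' | h'
      · exact absurd h' hwz
      · linarith [sub_eq_zero.mp h']
    -- conclude h z = a
    have habs : ‖h z‖ ≤ M := hmax z (Finset.mem_univ z)
    have hre' : a.re * (h z).re + a.im * (h z).im = M ^ 2 := by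
      have e : ((starRingEnd ℂ) a * h z).re = a.re * (h z).re + a.im * (h z).im := by
        rw [Complex.mul_re, Complex.conj_re, Complex.conj_im]; ring
      rw [e] at hre; exact hre
    have hsq1 : (h z).re ^ 2 + (h z).im ^ 2 ≤ M ^ 2 := by
      have := Complex.sq_norm (h z)
      have h2 : Complex.normSq (h z) = (h z).re ^ 2 + (h z).im ^ 2 := by
        rw [Complex.normSq_apply]; ring
      nlinarith [norm_nonneg (h z), norm_nonneg a]
    have hsq2 : a.re ^ 2 + a.im ^ 2 = M ^ 2 := by
      have := Complex.sq_norm a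
      rw [Complex.normSq_apply] at this
      nlinarith
    have : (h z).re = a.re ∧ (h z).im = a.im := by
      constructor <;> nlinarith [sq_nonneg ((h z).re - a.re), sq_nonneg ((h z).im - a.im)]
    exact Complex.ext this.1 this.2
  intro x y
  rw [key x, key y]

lemma exists_poisson {E : Type*} [Fintype E] [DecidableEq E] [Nonempty E]
    (p : E → E → ℝ) (hp0 : ∀ x y, 0 ≤ p x y) (hp1 : ∀ x, ∑ y, p x y = 1)
    (hPirr : ∀ x y, ∃ n : ℕ, 0 < ((Matrix.of p) ^ n) x y)
    (σ : E → ℝ) (hσpos : ∀ x, 0 < σ x) (hσ1 : ∑ x, σ x = 1)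
    (hσinv : ∀ y, ∑ x, σ x * p x y = σ y)
    (u : E → ℝ) (hu0 : ∑ x, σ x * u x = 0) (c : ℝ) (hc : 0 ≤ c) (hub : ∀ x, |u x| ≤ c) :
    ∃ g : E → ℝ, (∀ x, g x - ∑ y, p x y * g y = u x) ∧
      (∀ x, |g x| ≤ pseudoResNormClassical p σ * c) := by
  classical
  -- the linear functional and the subspace F
  set ℓ : (E → ℂ) →ₗ[ℂ] ℂ :=
    { toFun := fun h => ∑ x, (σ x : ℂ) * h x
      map_add' := by
        intro h h'; simp only [Pi.add_apply, mul_add, Finset.sum_add_distrib]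
      map_smul' := by
        intro a h; simp only [Pi.smul_apply, smul_eq_mul, RingHom.id_apply, Finset.mul_sum]
        exact Finset.sum_congr rfl fun x _ => by ring } with hℓ
  set T : (E → ℂ) →ₗ[ℂ] (E → ℂ) :=
    { toFun := fun h x => h x - ∑ y, (p x y : ℂ) * h y
      map_add' := by
        intro h h'; funext x
        simp only [Pi.add_apply, mul_add, Finset.sum_add_distrib]; ring
      map_smul' := by
        intro a h; funext x
        simp only [Pi.smul_apply, smul_eq_mul, RingHom.id_apply, Finset.mul_sum]
        have : ∀ y, (p x y : ℂ) * (a * h y) = a * ((p x y : ℂ) * h y) := fun y => by ring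
        rw [Finset.sum_congr rfl fun y _ => this y, ← Finset.mul_sum]; ring } with hT
  set F : Submodule ℂ (E → ℂ) := LinearMap.ker ℓ with hF
  have hTF : ∀ h ∈ F, T h ∈ F := by
    intro h hh
    have hh' : ∑ x, (σ x : ℂ) * h x = 0 := hh
    show ∑ x, (σ x : ℂ) * (h x - ∑ y, (p x y : ℂ) * h y) = 0
    have e1 : ∑ x, (σ x : ℂ) * (h x - ∑ y, (p x y : ℂ) * h y)
        = ∑ x, (σ x : ℂ) * h x - ∑ x, ∑ y, (σ x : ℂ) * ((p x y : ℂ) * h y) := by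
      rw [← Finset.sum_sub_distrib]
      apply Finset.sum_congr rfl; intro x _
      rw [mul_sub, Finset.mul_sum]
    rw [e1, hh']
    have e2 : ∑ x, ∑ y, (σ x : ℂ) * ((p x y : ℂ) * h y)
        = ∑ y, (σ y : ℂ) * h y := by
      rw [Finset.sum_comm]
      apply Finset.sum_congr rfl; intro y _
      have : ∑ x, (σ x : ℂ) * ((p x y : ℂ) * h y)
          = (∑ x, ((σ x * p x y : ℝ) : ℂ)) * h y := by
        rw [Finset.sum_mul]
        apply Finset.sum_congr rfl; intro x _
        push_cast; ring
      rw [this, ← Complex.ofReal_sum]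
      rw [show ∑ x, σ x * p x y = σ y from hσinv y]
    rw [e2, hh']
    ring
  set Tres : F →ₗ[ℂ] F := T.restrict hTF with hTres
  have hinj : Function.Injective Tres := by
    rw [← LinearMap.ker_eq_bot]
    rw [LinearMap.ker_eq_bot']
    intro m hm
    have hm' : T (m : E → ℂ) = 0 := by
      have := congrArg (Subtype.val) hm
      exact this
    have hharm : ∀ x, (m : E → ℂ) x = ∑ y, (p x y : ℂ) * (m : E → ℂ) y := by
      intro x
      have := congrFun hm' x
      simp only [Pi.zero_apply] at this
      have : (m : E → ℂ) x - ∑ y, (p x y : ℂ) * (m : E → ℂ) y = 0 := this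
      linear_combination this
    have hconst := harmonic_const p hp0 hp1 hPirr _ hharm
    have hmem : ∑ x, (σ x : ℂ) * (m : E → ℂ) x = 0 := m.2
    obtain ⟨x₁⟩ := ‹Nonempty E›
    have hval : ∀ x, (m : E → ℂ) x = (m : E → ℂ) x₁ := fun x => hconst x x₁
    have : (∑ x, (σ x : ℂ)) * (m : E → ℂ) x₁ = 0 := by
      rw [Finset.sum_mul, ← hmem]
      exact Finset.sum_congr rfl fun x _ => by rw [hval x]
    have hσsum : (∑ x, (σ x : ℂ)) = 1 := by
      rw [← Complex.ofReal_sum, hσ1, Complex.ofReal_one]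
    rw [hσsum, one_mul] at this
    ext x
    rw [hval x, this]
    rfl
  have hsurj : Function.Surjective Tres :=
    (LinearMap.injective_iff_surjective).mp hinj
  set e : F ≃ₗ[ℂ] F := LinearEquiv.ofBijective Tres ⟨hinj, hsurj⟩ with he
  set C : ℝ := ‖LinearMap.toContinuousLinearMap (e.symm : F →ₗ[ℂ] F)‖ with hC
  have hCbound : ∀ m : F, ‖(m : E → ℂ)‖ ≤ C * ‖(T (m : E → ℂ))‖ := by
    intro m
    have h1 : (e.symm (e m)) = m := e.symm_apply_apply m
    have h2 : ‖e.symm (e m)‖ ≤ C * ‖e m‖ := by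
      rw [hC]
      exact (LinearMap.toContinuousLinearMap (e.symm : F →ₗ[ℂ] F)).le_opNorm (e m)
    rw [h1] at h2
    have h3 : ((e m : F) : E → ℂ) = T (m : E → ℂ) := rfl
    have h4 : ‖e m‖ = ‖(T (m : E → ℂ))‖ := by rw [← h3]; rfl
    rw [h4] at h2
    exact h2
  -- C belongs to the defining set
  set S : Set ℝ := {C : ℝ | 0 ≤ C ∧ ∀ h : E → ℂ, (∑ x, (σ x : ℂ) * h x = 0) →
    ‖h‖ ≤ C * ‖(fun x => h x - ∑ y, (p x y : ℂ) * h y)‖} with hS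
  have hCS : C ∈ S := by
    refine ⟨by rw [hC]; exact norm_nonneg (LinearMap.toContinuousLinearMap (e.symm : F →ₗ[ℂ] F)), fun h hh => ?_⟩
    have hmem : h ∈ F := hh
    exact hCbound ⟨h, hmem⟩
  have hSne : S.Nonempty := ⟨C, hCS⟩
  have hNdef : pseudoResNormClassical p σ = sInf S := rfl
  set N : ℝ := pseudoResNormClassical p σ with hN
  have hN0 : 0 ≤ N := by
    rw [hNdef]
    exact Real.sInf_nonneg fun b hb => hb.1
  have hNbound : ∀ h : E → ℂ, (∑ x, (σ x : ℂ) * h x = 0) →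
      ‖h‖ ≤ N * ‖(fun x => h x - ∑ y, (p x y : ℂ) * h y)‖ := by
    intro h hh
    rcases eq_or_lt_of_le (norm_nonneg (fun x => h x - ∑ y, (p x y : ℂ) * h y)) with h0 | h0
    · have h1 := hCS.2 h hh
      rw [← h0] at h1 ⊢
      simpa using h1
    · have hdiv : ∀ b ∈ S, ‖h‖ / ‖(fun x => h x - ∑ y, (p x y : ℂ) * h y)‖ ≤ b := by
        intro b hb
        rw [div_le_iff₀ h0]
        exact hb.2 h hh
      have h2 : ‖h‖ / ‖(fun x => h x - ∑ y, (p x y : ℂ) * h y)‖ ≤ sInf S := le_csInf hSne hdiv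
      rw [div_le_iff₀ h0] at h2
      rw [hNdef]
      exact h2
  -- now solve for u
  set uC : E → ℂ := fun x => ((u x : ℝ) : ℂ) with huC
  have huF : uC ∈ F := by
    show ∑ x, (σ x : ℂ) * uC x = 0
    have : ∑ x, (σ x : ℂ) * uC x = ((∑ x, σ x * u x : ℝ) : ℂ) := by
      push_cast; rfl
    rw [this, hu0, Complex.ofReal_zero]
  obtain ⟨gF, hgF⟩ := hsurj ⟨uC, huF⟩
  set gC : E → ℂ := (gF : E → ℂ) with hgC
  have hTgC : T gC = uC := by
    have := congrArg (Subtype.val) hgF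
    exact this
  set g : E → ℝ := fun x => (gC x).re with hg
  refine ⟨g, ?_, ?_⟩
  · intro x
    have hx : gC x - ∑ y, (p x y : ℂ) * gC y = uC x := congrFun hTgC x
    have hre := congrArg Complex.re hx
    have e1 : (gC x - ∑ y, (p x y : ℂ) * gC y).re
        = g x - ∑ y, p x y * g y := by
      rw [Complex.sub_re, Complex.re_sum]
      congr 1
      exact Finset.sum_congr rfl fun y _ => Complex.re_ofReal_mul _ _
    rw [e1] at hre
    rw [hre]
    simp [huC]
  · intro x
    have h1 : |g x| ≤ ‖gC x‖ := Complex.abs_re_le_norm _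
    have h2 : ‖gC x‖ ≤ ‖gC‖ := norm_le_pi_norm gC x
    have h3 : ‖gC‖ ≤ N * ‖(fun x => gC x - ∑ y, (p x y : ℂ) * gC y)‖ :=
      hNbound gC gF.2
    have h4 : (fun x => gC x - ∑ y, (p x y : ℂ) * gC y) = uC := hTgC
    rw [h4] at h3
    have h5 : ‖uC‖ ≤ c := by
      apply pi_norm_le_iff_of_nonneg hc |>.mpr
      intro x
      rw [huC]
      simpa [Complex.norm_real] using hub x
    have h6 : N * ‖uC‖ ≤ N * c := mul_le_mul_of_nonneg_left h5 hN0
    linarith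


/-- **Hoeffding-type concentration bound for empirical fluxes of a classical Markov
chain** (Proposition 5.2). -/
theorem hoeffding_classical_fluxes
    {E : Type*} [Fintype E] [DecidableEq E] [Nonempty E]
    (p : E → E → ℝ) (hp0 : ∀ x y, 0 ≤ p x y) (hp1 : ∀ x, ∑ y, p x y = 1)
    -- P is irreducible
    (hPirr : ∀ x y, ∃ n : ℕ, 0 < ((Matrix.of p) ^ n) x y)
    (σ : E → ℝ) (hσpos : ∀ x, 0 < σ x) (hσ1 : ∑ x, σ x = 1)
    (hσinv : ∀ y, ∑ x, σ x * p x y = σ y)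
    (f : E → E → ℝ) (c : ℝ) (hc : 0 < c)
    -- π(f) = 0, with π(x,y) = σ_x p_{xy}
    (hmean : ∑ x, ∑ y, f x y * (σ x * p x y) = 0)
    -- max over Ẽ of |f| equals c
    (hbdd : ∀ x y, 0 < p x y → |f x y| ≤ c)
    (hatt : ∃ x y, 0 < p x y ∧ |f x y| = c)
    (ν : E → ℝ) (hν0 : ∀ x, 0 ≤ ν x) (hν1 : ∑ x, ν x = 1)
    (γ : ℝ) (hγ : 0 < γ) (n : ℕ) (hn : 1 ≤ n)
    -- G = (1 + ‖(Id−P)^{-1}|_F‖_∞)·c and nγ ≥ 2G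
    (hnγ : 2 * ((1 + pseudoResNormClassical p σ) * c) ≤ (n : ℝ) * γ) :
    -- P_ν( (1/n) Σ_{k=1}^n f(X_k, X_{k+1}) ≥ γ ) ≤ exp(−(nγ − 2G)²/(2(n−1)G²))
    ∑ ω : Fin (n + 1) → E,
      Set.indicator
        {ω : Fin (n + 1) → E |
          γ ≤ (1 / n : ℝ) * ∑ k : Fin n, f (ω k.castSucc) (ω k.succ)}
        (fun ω => ν (ω 0) * ∏ k : Fin n, p (ω k.castSucc) (ω k.succ)) ω
      ≤ Real.exp (-((n : ℝ) * γ - 2 * ((1 + pseudoResNormClassical p σ) * c)) ^ 2 /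
          (2 * ((n : ℝ) - 1) * ((1 + pseudoResNormClassical p σ) * c) ^ 2)) := by
  classical
  set N : ℝ := pseudoResNormClassical p σ with hN
  have hN0 : 0 ≤ N := by
    rw [hN]; unfold pseudoResNormClassical
    exact Real.sInf_nonneg fun b hb => hb.1
  set Gc : ℝ := (1 + N) * c with hGc
  have hG : 0 < Gc := by rw [hGc]; nlinarith
  clear_value N
  -- the function u and the Poisson solution g
  set u : E → ℝ := fun x => ∑ y, p x y * f x y with hu
  have hu0 : ∑ x, σ x * u x = 0 := by
    rw [← hmean]
    apply Finset.sum_congr rfl; intro x _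
    rw [hu]
    rw [Finset.mul_sum]
    exact Finset.sum_congr rfl fun y _ => by ring
  have hub : ∀ x, |u x| ≤ c := by
    intro x
    rw [hu]
    calc |∑ y, p x y * f x y| ≤ ∑ y, |p x y * f x y| := Finset.abs_sum_le_sum_abs _ _
      _ ≤ ∑ y, p x y * c := by
          apply Finset.sum_le_sum; intro y _
          rw [abs_mul, abs_of_nonneg (hp0 x y)]
          rcases (hp0 x y).lt_or_eq with h | h
          · exact mul_le_mul_of_nonneg_left (hbdd x y h) (hp0 x y)
          · rw [← h]; simp
      _ = c := by rw [← Finset.sum_mul, hp1, one_mul]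
  obtain ⟨g, hgP, hgB0⟩ := exists_poisson p hp0 hp1 hPirr σ hσpos hσ1 hσinv u hu0 c hc.le hub
  have hgB : ∀ x, |g x| ≤ N * c := by rw [hN]; exact hgB0
  clear_value u
  have hmeanv : ∀ x, ∑ y, p x y * (f x y + g y) = g x := by
    intro x
    have h1 := hgP x
    have h2 : ∑ y, p x y * (f x y + g y) = u x + ∑ y, p x y * g y := by
      rw [hu]
      rw [← Finset.sum_add_distrib]
      exact Finset.sum_congr rfl fun y _ => by ring
    rw [h2]; linarith
  have hvbdd : ∀ x y, 0 < p x y → |f x y + g y| ≤ Gc := by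
    intro x y hxy
    calc |f x y + g y| ≤ |f x y| + |g y| := abs_add_le _ _
      _ ≤ c + N * c := add_le_add (hbdd x y hxy) (hgB y)
      _ = Gc := by rw [hGc]; ring
  clear_value Gc
  have hweight : ∑ ω : Fin (n + 1) → E,
      (ν (ω 0) * ∏ k : Fin n, p (ω k.castSucc) (ω k.succ)) ≤ 1 := by
    have := path_sum_le n (fun _ => p) (fun _ => 1) ν (fun _ x y => hp0 x y)
      (fun _ x => le_of_eq (hp1 x)) hν0
    simpa [hν1] using this
  obtain ⟨m, rfl⟩ : ∃ m, n = m + 1 := ⟨n - 1, by omega⟩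
  rcases Nat.lt_or_ge m 1 with hm0 | hm1
  · -- case n = 1
    obtain rfl : m = 0 := by omega
    have hden : 2 * ((((0 + 1 : ℕ)) : ℝ) - 1) * Gc ^ 2 = 0 := by norm_num
    rw [hden, div_zero, Real.exp_zero]
    refine le_trans (Finset.sum_le_sum fun ω _ => ?_) hweight
    exact Set.indicator_le_self'
      (fun ω' _ => mul_nonneg (hν0 _) (Finset.prod_nonneg fun k _ => hp0 _ _)) ω
  · -- case n ≥ 2
    have hmR : (0 : ℝ) < (m : ℝ) := by exact_mod_cast hm1
    set t : ℝ := (↑(m + 1) : ℝ) * γ - 2 * Gc with hts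
    have ht0 : 0 ≤ t := by rw [hts]; linarith [hnγ]
    set lam : ℝ := t / ((m : ℝ) * Gc ^ 2) with hlam
    have hlam0 : 0 ≤ lam := by
      rw [hlam]; exact div_nonneg ht0 (by positivity)
    clear_value t lam
    set q : Fin (m + 1) → E → E → ℝ := fun k x y =>
      if (k : ℕ) < m then p x y * Real.exp (lam * (f x y + g y - g x)) else p x y with hq
    set K : Fin (m + 1) → ℝ := fun k =>
      if (k : ℕ) < m then Real.exp (lam ^ 2 * Gc ^ 2 / 2) else 1 with hK
    have hq0 : ∀ k x y, 0 ≤ q k x y := by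
      intro k x y
      simp only [hq]
      split
      · exact mul_nonneg (hp0 x y) (Real.exp_pos _).le
      · exact hp0 x y
    have hqK : ∀ k x, ∑ y, q k x y ≤ K k := by
      intro k x
      simp only [hq, hK]
      by_cases hk : (k : ℕ) < m
      · simp only [hk, if_true]
        have h0 := hoeffding_discrete (fun y => p x y) (fun y => f x y + g y) Gc lam hG
          (fun y => hp0 x y) (hp1 x)
          (fun y hy => hvbdd x y ((hp0 x y).lt_of_ne (Ne.symm hy)))
        rw [hmeanv x] at h0
        exact h0
      · simp only [hk, if_false]
        exact le_of_eq (hp1 x)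
    have hKprod : ∏ k : Fin (m + 1), K k = Real.exp ((m : ℝ) * (lam ^ 2 * Gc ^ 2 / 2)) := by
      simp only [hK]
      rw [Fin.prod_univ_castSucc]
      have h1 : ∀ j : Fin m,
          (if ((j.castSucc : Fin (m + 1)) : ℕ) < m then Real.exp (lam ^ 2 * Gc ^ 2 / 2) else 1)
          = Real.exp (lam ^ 2 * Gc ^ 2 / 2) := by
        intro j
        rw [if_pos]
        rw [Fin.coe_castSucc]
        exact j.isLt
      rw [Finset.prod_congr rfl fun j _ => h1 j]
      rw [Fin.val_last, if_neg (lt_irrefl m), mul_one, Finset.prod_const]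
      rw [Finset.card_univ, Fintype.card_fin, ← Real.exp_nat_mul]
    clear_value q K
    have hpoint : ∀ ω : Fin (m + 1 + 1) → E,
        Set.indicator
          {ω : Fin (m + 1 + 1) → E |
            γ ≤ (1 / ↑(m + 1) : ℝ) * ∑ k : Fin (m + 1), f (ω k.castSucc) (ω k.succ)}
          (fun ω => ν (ω 0) * ∏ k : Fin (m + 1), p (ω k.castSucc) (ω k.succ)) ω
        ≤ Real.exp (-(lam * t)) *
            (ν (ω 0) * ∏ k : Fin (m + 1), q k (ω k.castSucc) (ω k.succ)) := by
      intro ω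
      have hw0 : 0 ≤ ν (ω 0) * ∏ k : Fin (m + 1), p (ω k.castSucc) (ω k.succ) :=
        mul_nonneg (hν0 _) (Finset.prod_nonneg fun k _ => hp0 _ _)
      have hqprod : ∏ k : Fin (m + 1), q k (ω k.castSucc) (ω k.succ)
          = (∏ k : Fin (m + 1), p (ω k.castSucc) (ω k.succ)) *
            Real.exp (lam * ∑ j : Fin m,
              (f (ω j.castSucc.castSucc) (ω j.castSucc.succ) + g (ω j.castSucc.succ)
                - g (ω j.castSucc.castSucc))) := by
        simp only [hq]
        rw [Fin.prod_univ_castSucc]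
        rw [Fin.prod_univ_castSucc (fun k : Fin (m + 1) => p (ω k.castSucc) (ω k.succ))]
        have h1 : ∀ j : Fin m,
            (if ((j.castSucc : Fin (m + 1)) : ℕ) < m then
              p (ω j.castSucc.castSucc) (ω j.castSucc.succ) *
                Real.exp (lam * (f (ω j.castSucc.castSucc) (ω j.castSucc.succ)
                  + g (ω j.castSucc.succ) - g (ω j.castSucc.castSucc)))
            else p (ω j.castSucc.castSucc) (ω j.castSucc.succ))
            = p (ω j.castSucc.castSucc) (ω j.castSucc.succ) *
                Real.exp (lam * (f (ω j.castSucc.castSucc) (ω j.castSucc.succ)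
                  + g (ω j.castSucc.succ) - g (ω j.castSucc.castSucc))) := by
          intro j
          rw [if_pos]
          rw [Fin.coe_castSucc]
          exact j.isLt
        rw [Finset.prod_congr rfl fun j _ => h1 j]
        rw [Fin.val_last, if_neg (lt_irrefl m)]
        rw [Finset.prod_mul_distrib, ← Real.exp_sum, ← Finset.mul_sum]
        ring
      rw [Set.indicator_apply]
      split_ifs with hmem
      · rcases hw0.lt_or_eq with hwpos | hwzero
        · -- positive weight, on the event
          have hedge : ∀ k : Fin (m + 1), 0 < p (ω k.castSucc) (ω k.succ) := by
            intro k
            rcases (hp0 _ _).lt_or_eq with h | h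
            · exact h
            · exfalso
              have hz : ∏ k : Fin (m + 1), p (ω k.castSucc) (ω k.succ) = 0 :=
                Finset.prod_eq_zero (Finset.mem_univ k) h.symm
              rw [hz, mul_zero] at hwpos
              exact lt_irrefl 0 hwpos
          have htel : ∑ j : Fin m,
              (f (ω j.castSucc.castSucc) (ω j.castSucc.succ) + g (ω j.castSucc.succ)
                - g (ω j.castSucc.castSucc))
              = (∑ j : Fin m, f (ω j.castSucc.castSucc) (ω j.castSucc.succ))
                + (g (ω (Fin.last m).castSucc) - g (ω 0)) := by
            have e1 : ∀ j : Fin m,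
                f (ω j.castSucc.castSucc) (ω j.castSucc.succ) + g (ω j.castSucc.succ)
                  - g (ω j.castSucc.castSucc)
                = f (ω j.castSucc.castSucc) (ω j.castSucc.succ) +
                  ((fun i : Fin (m + 1) => g (ω i.castSucc)) j.succ
                    - (fun i : Fin (m + 1) => g (ω i.castSucc)) j.castSucc) := by
              intro j
              dsimp only
              rw [Fin.succ_castSucc]
              ring
            rw [Finset.sum_congr rfl fun j _ => e1 j, Finset.sum_add_distrib,
              fin_telescope (fun i : Fin (m + 1) => g (ω i.castSucc))]
            try dsimp only
            try rw [Fin.castSucc_zero]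
          have hSf : ∑ k : Fin (m + 1), f (ω k.castSucc) (ω k.succ)
              = (∑ j : Fin m, f (ω j.castSucc.castSucc) (ω j.castSucc.succ))
                + f (ω (Fin.last m).castSucc) (ω (Fin.last m).succ) := by
            rw [Fin.sum_univ_castSucc]
          have hSfge : (↑(m + 1) : ℝ) * γ ≤ ∑ k : Fin (m + 1), f (ω k.castSucc) (ω k.succ) := by
            have hmem' : γ ≤ (1 / ↑(m + 1) : ℝ) *
                ∑ k : Fin (m + 1), f (ω k.castSucc) (ω k.succ) := hmem
            have hnpos : (0 : ℝ) < (↑(m + 1) : ℝ) := by positivity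
            rw [one_div, inv_mul_eq_div, le_div_iff₀ hnpos] at hmem'
            linarith
          have hflast : |f (ω (Fin.last m).castSucc) (ω (Fin.last m).succ)| ≤ c :=
            hbdd _ _ (hedge (Fin.last m))
          have hg1 : |g (ω (Fin.last m).castSucc)| ≤ N * c := hgB _
          have hg2 : |g (ω 0)| ≤ N * c := hgB _
          have hSDge : t ≤ ∑ j : Fin m,
              (f (ω j.castSucc.castSucc) (ω j.castSucc.succ) + g (ω j.castSucc.succ)
                - g (ω j.castSucc.castSucc)) := by
            rw [htel, hts]
            have e2 := abs_le.mp hflast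
            have e3 := abs_le.mp hg1
            have e4 := abs_le.mp hg2
            have e5 : Gc = (1 + N) * c := hGc
            rw [hSf] at hSfge
            nlinarith
          rw [hqprod]
          have e6 : Real.exp (-(lam * t)) *
              (ν (ω 0) * ((∏ k : Fin (m + 1), p (ω k.castSucc) (ω k.succ)) *
                Real.exp (lam * ∑ j : Fin m,
                  (f (ω j.castSucc.castSucc) (ω j.castSucc.succ) + g (ω j.castSucc.succ)
                    - g (ω j.castSucc.castSucc)))))
              = (ν (ω 0) * ∏ k : Fin (m + 1), p (ω k.castSucc) (ω k.succ)) *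
                Real.exp ((lam * ∑ j : Fin m,
                  (f (ω j.castSucc.castSucc) (ω j.castSucc.succ) + g (ω j.castSucc.succ)
                    - g (ω j.castSucc.castSucc))) + -(lam * t)) := by
            rw [Real.exp_add]
            ring
          rw [e6]
          apply le_mul_of_one_le_right hw0
          rw [Real.one_le_exp_iff]
          have h7 := mul_le_mul_of_nonneg_left hSDge hlam0
          linarith
        · -- zero weight
          have hzero : ν (ω 0) * ∏ k : Fin (m + 1), p (ω k.castSucc) (ω k.succ) = 0 :=
            hwzero.symm
          rw [hqprod, ← mul_assoc (ν (ω 0)), hzero]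
          simp
      · exact mul_nonneg (Real.exp_pos _).le
          (mul_nonneg (hν0 _) (Finset.prod_nonneg fun k _ => hq0 k _ _))
    calc ∑ ω : Fin (m + 1 + 1) → E,
        Set.indicator
          {ω : Fin (m + 1 + 1) → E |
            γ ≤ (1 / ↑(m + 1) : ℝ) * ∑ k : Fin (m + 1), f (ω k.castSucc) (ω k.succ)}
          (fun ω => ν (ω 0) * ∏ k : Fin (m + 1), p (ω k.castSucc) (ω k.succ)) ω
        ≤ ∑ ω : Fin (m + 1 + 1) → E, Real.exp (-(lam * t)) *
            (ν (ω 0) * ∏ k : Fin (m + 1), q k (ω k.castSucc) (ω k.succ)) :=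
          Finset.sum_le_sum fun ω _ => hpoint ω
      _ = Real.exp (-(lam * t)) * ∑ ω : Fin (m + 1 + 1) → E,
            (ν (ω 0) * ∏ k : Fin (m + 1), q k (ω k.castSucc) (ω k.succ)) := by
          rw [Finset.mul_sum]
      _ ≤ Real.exp (-(lam * t)) * ((∑ x, ν x) * ∏ k : Fin (m + 1), K k) := by
          apply mul_le_mul_of_nonneg_left _ (Real.exp_pos _).le
          exact path_sum_le (m + 1) q K ν hq0 hqK hν0
      _ = Real.exp (-(lam * t)) * Real.exp ((m : ℝ) * (lam ^ 2 * Gc ^ 2 / 2)) := by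
          rw [hν1, hKprod, one_mul]
      _ = Real.exp (-(lam * t) + (m : ℝ) * (lam ^ 2 * Gc ^ 2 / 2)) := (Real.exp_add _ _).symm
      _ = Real.exp (-t ^ 2 / (2 * ((↑(m + 1) : ℝ) - 1) * Gc ^ 2)) := by
          congr 1
          have h1 : ((↑(m + 1) : ℝ) - 1) = (m : ℝ) := by push_cast; ring
          rw [h1, hlam]
          have hGne : Gc ≠ 0 := ne_of_gt hG
          have hmne : (m : ℝ) ≠ 0 := ne_of_gt hmR
          field_simp
          ring
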